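/- Nestedness of optimal portfolios: there exists a sequence of portfolios X_1 ⊂ X_2 ⊂ … ⊂ X_m with |X_h| = h such that each X_h maximizes v(X) over all X ⊆ C with |X| ≤ h. -/

import Mathlib

noncomputable def val (f t : ℕ → ℝ) (X : Finset ℕ) : ℝ :=
  ∑ j ∈ X, f j * t j * ∏ i ∈ X.filter (fun i => j < i), (1 - f i)

lemma val_empty (f t : ℕ → ℝ) : val f t ∅ = 0 := by simp [val]

lemma val_congr {f t f' t' : ℕ → ℝ} {X : Finset ℕ}
    (hf : ∀ j ∈ X, f j = f' j) (ht : ∀ j ∈ X, t j = t' j) :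
    val f t X = val f' t' X := by
  unfold val
  apply Finset.sum_congr rfl
  intro j hj
  rw [hf j hj, ht j hj]
  congr 1
  apply Finset.prod_congr rfl
  intro i hi
  rw [hf i (Finset.mem_filter.mp hi).1]

lemma val_insert_top (f t : ℕ → ℝ) {X : Finset ℕ} {c : ℕ}
    (hcX : c ∉ X) (hlt : ∀ i ∈ X, i < c) :
    val f t (insert c X) = f c * t c + (1 - f c) * val f t X := by
  unfold val
  rw [Finset.sum_insert hcX]
  have h1 : (insert c X).filter (fun i => c < i) = ∅ := by
    ext i
    simp only [Finset.mem_filter, Finset.mem_insert, Finset.notMem_empty, iff_false]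
    rintro ⟨hi | hi, hci⟩
    · omega
    · exact absurd hci (by have := hlt i hi; omega)
  rw [h1]
  simp only [Finset.prod_empty, mul_one]
  have h2 : ∀ j ∈ X, (insert c X).filter (fun i => j < i)
      = insert c (X.filter (fun i => j < i)) := by
    intro j hj
    rw [Finset.filter_insert]
    rw [if_pos (hlt j hj)]
  rw [Finset.mul_sum]
  congr 1
  apply Finset.sum_congr rfl
  intro j hj
  rw [h2 j hj, Finset.prod_insert (fun hc => hcX (Finset.mem_filter.mp hc).1)]
  ring

lemma val_nonneg {f t : ℕ → ℝ} {X : Finset ℕ}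
    (hf : ∀ j, 0 ≤ f j ∧ f j ≤ 1) (ht : ∀ j, 0 ≤ t j) :
    0 ≤ val f t X := by
  apply Finset.sum_nonneg
  intro j _
  apply mul_nonneg (mul_nonneg (hf j).1 (ht j))
  apply Finset.prod_nonneg
  intro i _
  linarith [(hf i).2]

lemma val_le {f t : ℕ → ℝ} {X : Finset ℕ} {τ : ℝ}
    (hf : ∀ j, 0 ≤ f j ∧ f j ≤ 1)
    (hXτ : ∀ j ∈ X, t j ≤ τ) (hτ : 0 ≤ τ) :
    val f t X ≤ τ := by
  induction X using Finset.induction_on_max with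
  | empty => simpa [val_empty] using hτ
  | insert c s hcs ih =>
    have hcns : c ∉ s := fun h => lt_irrefl c (hcs c h)
    rw [val_insert_top f t hcns hcs]
    have h1 : val f t s ≤ τ := ih (fun j hj => hXτ j (Finset.mem_insert_of_mem hj))
    have h2 : t c ≤ τ := hXτ c (Finset.mem_insert_self c s)
    nlinarith [(hf c).1, (hf c).2]

lemma val_insert_mono {f t : ℕ → ℝ}
    (hf : ∀ j, 0 ≤ f j ∧ f j ≤ 1) (ht : ∀ j, 0 ≤ t j) (hmono : Monotone t) :
    ∀ (X : Finset ℕ), ∀ b ∉ X, val f t X ≤ val f t (insert b X) := by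
  intro X
  induction X using Finset.induction_on_max with
  | empty =>
    intro b _
    rw [val_empty, val_insert_top f t (Finset.notMem_empty b) (by simp), val_empty]
    nlinarith [(hf b).1, ht b]
  | insert c s hcs ih =>
    intro b hb
    have hcns : c ∉ s := fun h => lt_irrefl c (hcs c h)
    have hbc : b ≠ c := fun h => hb (h ▸ Finset.mem_insert_self c s)
    rcases lt_or_gt_of_ne hbc with hlt | hgt
    · -- b < c : insert b (insert c s) = insert c (insert b s)
      have hbs : b ∉ s := fun h => hb (Finset.mem_insert_of_mem h)
      rw [Finset.insert_comm]
      have hcnbs : c ∉ insert b s := by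
        simp only [Finset.mem_insert]
        rintro (h | h)
        · exact hbc h.symm
        · exact hcns h
      rw [val_insert_top f t hcnbs (by
        intro i hi
        rcases Finset.mem_insert.mp hi with h | h
        · exact h ▸ hlt
        · exact hcs i h)]
      rw [val_insert_top f t hcns hcs]
      have := ih b hbs
      nlinarith [(hf c).1, (hf c).2]
    · -- b > c : b is the new top
      rw [val_insert_top f t hb (by
        intro i hi
        rcases Finset.mem_insert.mp hi with h | h
        · exact h ▸ hgt
        · exact lt_trans (hcs i h) hgt)]
      have h1 : val f t (insert c s) ≤ t b := by
        apply val_le hf _ (ht b)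
        intro j hj
        apply hmono
        rcases Finset.mem_insert.mp hj with h | h
        · exact h ▸ le_of_lt hgt
        · exact le_of_lt (lt_trans (hcs j h) hgt)
      nlinarith [(hf b).1, (hf b).2]

lemma key {f t : ℕ → ℝ} (hf : ∀ j, 0 ≤ f j ∧ f j ≤ 1) (ht : ∀ j, 0 ≤ t j)
    (hmono : Monotone t) {φ : ℝ} (hφ0 : 0 ≤ φ) (hφ1 : φ ≤ 1) :
    ∀ (n : ℕ) (R : Finset ℕ) (a x : ℕ) (τ : ℝ), R.card ≤ n → a ∉ R → x ∉ R → a ≠ x →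
    (∀ j ∈ insert a (insert x R), t j ≤ τ) →
    val f t (insert a R) ≤ φ * τ + (1 - φ) * val f t R →
    val f t (insert x R) ≤ φ * τ + (1 - φ) * val f t R →
    val f t (insert x (insert a R)) ≤ φ * τ + (1 - φ) * val f t (insert a R) := by
  intro n
  induction n with
  | zero =>
    intro R a x τ hcard haR hxR hax hbound H1 H2
    have hR : R = ∅ := Finset.card_eq_zero.mp (Nat.le_zero.mp hcard)
    subst hR
    rcases lt_or_gt_of_ne hax with hlt | hgt
    · -- a < x : top is x
      rw [val_insert_top f t (by simp [hax.symm]) (by simp [hlt])]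
      rw [val_empty] at H1 H2
      rw [val_insert_top f t (Finset.notMem_empty a) (by simp), val_empty] at H1 ⊢
      rw [val_insert_top f t (Finset.notMem_empty x) (by simp), val_empty] at H2
      -- goal: f x*t x + (1-f x)*(f a*t a+(1-f a)*0) ≤ φ*τ+(1-φ)*(f a*t a+(1-f a)*0)
      set vA := f a * t a + (1 - f a) * 0 with hvA
      have hvA0 : 0 ≤ vA := by
        simp only [hvA, mul_zero, add_zero]
        exact mul_nonneg (hf a).1 (ht a)
      have hvAτ : vA ≤ τ := by
        have h1 : t a ≤ τ := hbound a (by simp)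
        simp only [hvA, mul_zero, add_zero]
        nlinarith [(hf a).1, (hf a).2, ht a]
      have htxτ : t x ≤ τ := hbound x (by simp)
      rcases le_or_gt φ (f x) with hc | hc
      · -- goal = H2 + (f x - φ)*(vA - 0)
        have := mul_nonneg (sub_nonneg.mpr hc) hvA0
        nlinarith [H2]
      · rcases le_or_gt vA (t x) with hc2 | hc2
        · nlinarith [mul_nonneg hφ0 (sub_nonneg.mpr htxτ),
            mul_nonneg (sub_nonneg.mpr hc.le) (sub_nonneg.mpr hc2)]
        · nlinarith [mul_nonneg hφ0 (sub_nonneg.mpr hvAτ),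
            mul_nonneg (hf x).1 (sub_nonneg.mpr hc2.le)]
    · -- a > x : top is a
      rw [Finset.insert_comm]
      rw [val_insert_top f t (by simp [hax]) (by simp [hgt])]
      rw [val_insert_top f t (Finset.notMem_empty a) (by simp)]
      have htaτ : t a ≤ τ := hbound a (by simp)
      nlinarith [H2, (hf a).1, (hf a).2, mul_nonneg hφ0 (sub_nonneg.mpr htaτ)]
  | succ n IH =>
    intro R a x τ hcard haR hxR hax hbound H1 H2
    have hax' : a ∈ insert a (insert x R) := Finset.mem_insert_self _ _
    set s := insert a (insert x R) with hs
    have hsne : s.Nonempty := ⟨a, hax'⟩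
    set c := s.max' hsne with hc
    have hcmem : c ∈ s := s.max'_mem hsne
    have hle : ∀ i ∈ s, i ≤ c := fun i hi => s.le_max' i hi
    rcases Finset.mem_insert.mp hcmem with hca | hmem
    · -- c = a: a is the top
      have hxa : x < a := by
        have := hle x (by simp [hs])
        have : x ≤ a := hca ▸ this
        omega
      have hRa : ∀ i ∈ R, i < a := by
        intro i hi
        have h1 : i ≤ c := hle i (by simp [hs, hi])
        have h2 : i ≠ a := fun h => haR (h ▸ hi)
        omega
      rw [Finset.insert_comm]
      rw [val_insert_top f t (by
          simp only [Finset.mem_insert]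
          rintro (h | h)
          · exact hax h
          · exact haR h)
        (by
          intro i hi
          rcases Finset.mem_insert.mp hi with h | h
          · exact h ▸ hxa
          · exact hRa i h)]
      rw [val_insert_top f t haR hRa] at H1 ⊢
      have htaτ : t a ≤ τ := hbound a (by simp [hs])
      nlinarith [H2, (hf a).1, (hf a).2, mul_nonneg hφ0 (sub_nonneg.mpr htaτ)]
    · rcases Finset.mem_insert.mp hmem with hcx | hcR
      · -- c = x : x is the top
        have h1 : a ≤ x := hcx ▸ hle a hax'
        have hax2 : a < x := lt_of_le_of_ne h1 hax
        have hRx : ∀ i ∈ R, i < x := by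
          intro i hi
          have h1 : i ≤ c := hle i (by simp [hs, hi])
          have h2 : i ≠ x := fun h => hxR (h ▸ hi)
          omega
        have hxnA : x ∉ insert a R := by
          simp only [Finset.mem_insert]
          rintro (h | h)
          · exact hax h.symm
          · exact hxR h
        rw [val_insert_top f t hxnA (by
          intro i hi
          rcases Finset.mem_insert.mp hi with h | h
          · exact h ▸ hax2
          · exact hRx i h)]
        rw [val_insert_top f t hxR hRx] at H2
        have hvRvA : val f t R ≤ val f t (insert a R) := val_insert_mono hf ht hmono R a haR
        have hτ0 : (0:ℝ) ≤ τ := le_trans (ht a) (hbound a hax')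
        have hvAτ : val f t (insert a R) ≤ τ := by
          apply val_le hf _ hτ0
          intro j hj
          apply hbound
          rcases Finset.mem_insert.mp hj with h | h
          · simp [hs, h]
          · simp [hs, h]
        have htxτ : t x ≤ τ := hbound x (by simp [hs])
        set vA := val f t (insert a R)
        set vR := val f t R
        rcases le_or_gt φ (f x) with hcc | hcc
        · nlinarith [H2, mul_nonneg (sub_nonneg.mpr hcc) (sub_nonneg.mpr hvRvA)]
        · rcases le_or_gt vA (t x) with hc2 | hc2
          · nlinarith [mul_nonneg hφ0 (sub_nonneg.mpr htxτ),
              mul_nonneg (sub_nonneg.mpr hcc.le) (sub_nonneg.mpr hc2)]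
          · nlinarith [mul_nonneg hφ0 (sub_nonneg.mpr hvAτ),
              mul_nonneg (hf x).1 (sub_nonneg.mpr hc2.le)]
      · -- c ∈ R : strip c and recurse
        have hac2 : a < c := by
          have h1 : a ≤ c := hle a hax'
          have h2 : a ≠ c := fun h => haR (h ▸ hcR)
          omega
        have hxc2 : x < c := by
          have h1 : x ≤ c := hle x (by simp [hs])
          have h2 : x ≠ c := fun h => hxR (h ▸ hcR)
          omega
        set R' := R.erase c with hR'
        have hcR' : c ∉ R' := Finset.notMem_erase c R
        have hRe : insert c R' = R := Finset.insert_erase hcR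
        have hR'lt : ∀ i ∈ R', i < c := by
          intro i hi
          have h1 : i ∈ R := Finset.mem_of_mem_erase hi
          have h2 : i ≠ c := Finset.ne_of_mem_erase hi
          have h3 : i ≤ c := hle i (by simp [hs, h1])
          omega
        have hcard' : R'.card ≤ n := by
          rw [hR', Finset.card_erase_of_mem hcR]
          omega
        have haR' : a ∉ R' := fun h => haR (Finset.mem_of_mem_erase h)
        have hxR' : x ∉ R' := fun h => hxR (Finset.mem_of_mem_erase h)
        have hcnaR' : c ∉ insert a R' := by
          simp only [Finset.mem_insert]
          rintro (h | h)
          · exact absurd h.symm (Nat.ne_of_lt hac2)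
          · exact hcR' h
        have hltaR' : ∀ i ∈ insert a R', i < c := by
          intro i hi
          rcases Finset.mem_insert.mp hi with h | h
          · exact h ▸ hac2
          · exact hR'lt i h
        have hcnxR' : c ∉ insert x R' := by
          simp only [Finset.mem_insert]
          rintro (h | h)
          · exact absurd h.symm (Nat.ne_of_lt hxc2)
          · exact hcR' h
        have hltxR' : ∀ i ∈ insert x R', i < c := by
          intro i hi
          rcases Finset.mem_insert.mp hi with h | h
          · exact h ▸ hxc2
          · exact hR'lt i h
        have hcnxaR' : c ∉ insert x (insert a R') := by
          simp only [Finset.mem_insert]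
          rintro (h | h | h)
          · exact absurd h.symm (Nat.ne_of_lt hxc2)
          · exact absurd h.symm (Nat.ne_of_lt hac2)
          · exact hcR' h
        have hltxaR' : ∀ i ∈ insert x (insert a R'), i < c := by
          intro i hi
          rcases Finset.mem_insert.mp hi with h | h
          · exact h ▸ hxc2
          · exact hltaR' i h
        -- rewrite all four vals
        have eR : val f t R = f c * t c + (1 - f c) * val f t R' := by
          rw [← hRe, val_insert_top f t hcR' hR'lt]
        have eA : val f t (insert a R) = f c * t c + (1 - f c) * val f t (insert a R') := by
          rw [← hRe, Finset.insert_comm, val_insert_top f t hcnaR' hltaR']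
        have eX : val f t (insert x R) = f c * t c + (1 - f c) * val f t (insert x R') := by
          rw [← hRe, Finset.insert_comm, val_insert_top f t hcnxR' hltxR']
        have eXA : val f t (insert x (insert a R))
            = f c * t c + (1 - f c) * val f t (insert x (insert a R')) := by
          rw [← hRe]
          have : insert x (insert a (insert c R')) = insert c (insert x (insert a R')) := by
            rw [Finset.insert_comm a c, Finset.insert_comm x c]
          rw [this, val_insert_top f t hcnxaR' hltxaR']
        have htcτ : t c ≤ τ := hbound c (by simp [hs, hcR])
        rw [eR] at H1 H2
        rw [eA] at H1 ⊢
        rw [eX] at H2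
        rw [eXA]
        rcases lt_or_ge (f c) 1 with hfc | hfc
        · have hpos : (0:ℝ) < 1 - f c := by linarith
          set τ' := (τ - f c * t c) / (1 - f c) with hτ'
          have hτ'id : (1 - f c) * τ' = τ - f c * t c := by
            rw [hτ', mul_comm]; exact div_mul_cancel₀ _ hpos.ne'
          have e1 : φ * ((1 - f c) * τ') = φ * (τ - f c * t c) := by rw [hτ'id]
          have hττ' : τ ≤ τ' := by
            rw [hτ', le_div_iff₀ hpos]
            nlinarith [mul_nonneg (hf c).1 (sub_nonneg.mpr htcτ)]
          have hbound' : ∀ j ∈ insert a (insert x R'), t j ≤ τ' := by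
            intro j hj
            refine le_trans ?_ hττ'
            apply hbound
            rcases Finset.mem_insert.mp hj with h | h
            · simp [hs, h]
            · rcases Finset.mem_insert.mp h with h2 | h2
              · simp [hs, h2]
              · simp [hs, Finset.mem_of_mem_erase h2]
          have H1' : val f t (insert a R') ≤ φ * τ' + (1 - φ) * val f t R' := by
            have h3 : (1 - f c) * val f t (insert a R')
                ≤ (1 - f c) * (φ * τ' + (1 - φ) * val f t R') := by
              linarith [H1, e1]
            exact le_of_mul_le_mul_left h3 hpos
          have H2' : val f t (insert x R') ≤ φ * τ' + (1 - φ) * val f t R' := by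
            have h3 : (1 - f c) * val f t (insert x R')
                ≤ (1 - f c) * (φ * τ' + (1 - φ) * val f t R') := by
              linarith [H2, e1]
            exact le_of_mul_le_mul_left h3 hpos
          have IH' := IH R' a x τ' hcard' haR' hxR' hax hbound' H1' H2'
          linarith [mul_le_mul_of_nonneg_left IH' hpos.le, e1]
        · have hfc1 : f c = 1 := le_antisymm (hf c).2 hfc
          rw [hfc1]
          ring_nf
          linarith [mul_nonneg hφ0 (sub_nonneg.mpr htcτ)]

lemma exists_insert_of_card {s T : Finset ℕ} (hsub : s ⊆ T) (hc : T.card = s.card + 1) :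
    ∃ a, a ∉ s ∧ T = insert a s := by
  have h1 : (T \ s).card = 1 := by rw [Finset.card_sdiff_of_subset hsub]; omega
  obtain ⟨a, ha⟩ := Finset.card_eq_one.mp h1
  have haT : a ∈ T \ s := ha ▸ Finset.mem_singleton_self a
  refine ⟨a, (Finset.mem_sdiff.mp haT).2, ?_⟩
  have h2 : T = s ∪ T \ s := (Finset.union_sdiff_of_subset hsub).symm
  rw [h2, ha]
  ext i
  simp [or_comm]

lemma chain {f t : ℕ → ℝ} (hf : ∀ j, 0 ≤ f j ∧ f j ≤ 1) (ht : ∀ j, 0 ≤ t j)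
    (hmono : Monotone t) :
    ∀ M : ℕ, ∃ Y : ℕ → Finset ℕ,
      (∀ h, h ≤ M → (Y h).card = h ∧ Y h ⊆ Finset.Icc 1 M ∧
        (∀ S ⊆ Finset.Icc 1 M, S.card ≤ h → val f t S ≤ val f t (Y h))) ∧
      (∀ h, h + 1 ≤ M → Y h ⊆ Y (h + 1)) := by
  intro M
  induction M with
  | zero =>
    refine ⟨fun _ => ∅, fun h hh => ?_, fun h hh => by omega⟩
    have h0 : h = 0 := by omega
    subst h0
    refine ⟨Finset.card_empty, by simp, fun S hS _ => ?_⟩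
    have : S = ∅ := Finset.subset_empty.mp (by simpa using hS)
    simp [this]
  | succ M IHM =>
    obtain ⟨Y, hY, hYchain⟩ := IHM
    set e := M + 1 with he
    set φ := f e with hφ
    set τ := t e with hτdef
    have hφ0 : 0 ≤ φ := (hf e).1
    have hφ1 : φ ≤ 1 := (hf e).2
    have heY : ∀ k, k ≤ M → e ∉ Y k := by
      intro k hk hmem
      have := (hY k hk).2.1 hmem
      rw [Finset.mem_Icc] at this
      omega
    have hYlt : ∀ k, k ≤ M → ∀ i ∈ Y k, i < e := by
      intro k hk i hi
      have := (hY k hk).2.1 hi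
      rw [Finset.mem_Icc] at this
      omega
    have hvaltop : ∀ k, k ≤ M →
        val f t (insert e (Y k)) = φ * τ + (1 - φ) * val f t (Y k) := by
      intro k hk
      exact val_insert_top f t (heY k hk) (hYlt k hk)
    have hVle : ∀ k, k ≤ M → val f t (Y k) ≤ τ := by
      intro k hk
      apply val_le hf
      · intro j hj
        have := (hY k hk).2.1 hj
        rw [Finset.mem_Icc] at this
        exact hmono (by omega : j ≤ e)
      · exact ht e
    classical
    obtain ⟨h0, hh01, hh0le, fact1, fact2⟩ :
        ∃ h0 : ℕ, 1 ≤ h0 ∧ h0 ≤ M + 1 ∧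
          (∀ h, 1 ≤ h → h ≤ M → h < h0 →
            φ * τ + (1 - φ) * val f t (Y (h - 1)) < val f t (Y h)) ∧
          (h0 ≤ M → val f t (Y h0) ≤ φ * τ + (1 - φ) * val f t (Y (h0 - 1))) := by
      by_cases hex : ∃ h, 1 ≤ h ∧ h ≤ M ∧
          val f t (Y h) ≤ φ * τ + (1 - φ) * val f t (Y (h - 1))
      · obtain ⟨h1, hM1, hc1⟩ := Nat.find_spec hex
        refine ⟨Nat.find hex, h1, by omega, ?_, fun _ => hc1⟩
        intro h hh1 hhM hlt
        have := Nat.find_min hex hlt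
        push_neg at this
        exact this hh1 hhM
      · push_neg at hex
        refine ⟨M + 1, by omega, le_refl _, ?_, by omega⟩
        intro h hh1 hhM _
        exact hex h hh1 hhM
    -- upward propagation of the "include e" condition
    have up : ∀ h, h0 ≤ h → h ≤ M →
        val f t (Y h) ≤ φ * τ + (1 - φ) * val f t (Y (h - 1)) := by
      intro h hh0 hhM
      induction h, hh0 using Nat.le_induction with
      | base => exact fact2 hhM
      | succ h hh0 IH =>
        have hhM' : h ≤ M := by omega
        have hcond := IH hhM'
        have hh1 : 1 ≤ h := by omega
        -- decompositions
        have hsub1 : Y (h - 1) ⊆ Y h := by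
          have h2 := hYchain (h - 1) (by omega : h - 1 + 1 ≤ M)
          have h3 : h - 1 + 1 = h := by omega
          rwa [h3] at h2
        have hsub2 : Y h ⊆ Y (h + 1) := hYchain h (by omega)
        have hcard1 : (Y h).card = (Y (h - 1)).card + 1 := by
          rw [(hY h hhM').1, (hY (h - 1) (by omega)).1]
          omega
        have hcard2 : (Y (h + 1)).card = (Y h).card + 1 := by
          rw [(hY (h + 1) hhM).1, (hY h hhM').1]
        obtain ⟨a, haR, hYh⟩ := exists_insert_of_card hsub1 hcard1
        obtain ⟨x, hxYh, hYh1⟩ := exists_insert_of_card hsub2 hcard2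
        have hxR : x ∉ Y (h - 1) := fun hc => hxYh (hsub1 hc)
        have hax : a ≠ x := fun hc => hxYh (hc ▸ hYh ▸ Finset.mem_insert_self a _)
        have hbnd : ∀ j ∈ insert a (insert x (Y (h - 1))), t j ≤ τ := by
          intro j hj
          have hjmem : j ∈ Finset.Icc 1 M := by
            rcases Finset.mem_insert.mp hj with h1 | h1
            · exact (hY h hhM').2.1 (h1 ▸ hYh ▸ Finset.mem_insert_self a _)
            · rcases Finset.mem_insert.mp h1 with h2 | h2
              · exact (hY (h + 1) hhM).2.1 (h2 ▸ hYh1 ▸ Finset.mem_insert_self x _)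
              · exact (hY (h - 1) (by omega)).2.1 h2
          rw [Finset.mem_Icc] at hjmem
          exact hmono (by omega : j ≤ e)
        have H1 : val f t (insert a (Y (h - 1))) ≤
            φ * τ + (1 - φ) * val f t (Y (h - 1)) := by
          rw [← hYh]; exact hcond
        have H2 : val f t (insert x (Y (h - 1))) ≤
            φ * τ + (1 - φ) * val f t (Y (h - 1)) := by
          refine le_trans ?_ hcond
          apply (hY h hhM').2.2
          · apply Finset.insert_subset
            · exact (hY (h + 1) hhM).2.1 (hYh1 ▸ Finset.mem_insert_self x _)
            · exact (hY (h - 1) (by omega)).2.1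
          · rw [Finset.card_insert_of_notMem hxR, (hY (h - 1) (by omega)).1]
            omega
        have hkey := key hf ht hmono hφ0 hφ1 (Y (h - 1)).card (Y (h - 1)) a x τ
          (le_refl _) haR hxR hax hbnd H1 H2
        rw [← hYh] at hkey
        have hYh1' : Y (h + 1) = insert x (Y h) := hYh1
        rw [← hYh1'] at hkey
        simpa using hkey
    -- the new chain
    refine ⟨fun h => if h < h0 then Y h else insert e (Y (h - 1)), ?_, ?_⟩
    · intro h hh
      by_cases hcase : h < h0
      · have hhM : h ≤ M := by omega
        simp only [if_pos hcase]
        refine ⟨(hY h hhM).1, ?_, ?_⟩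
        · exact (hY h hhM).2.1.trans (Finset.Icc_subset_Icc_right (by omega))
        · intro S hS hScard
          by_cases heS : e ∈ S
          · -- S contains e; since h < h0 the e-containing sets are strictly worse
            have hh1 : 1 ≤ h := by
              have : 1 ≤ S.card := Finset.card_pos.mpr ⟨e, heS⟩
              omega
            have hSe : S.erase e ⊆ Finset.Icc 1 M := by
              intro i hi
              have h1 := hS (Finset.mem_of_mem_erase hi)
              have h2 := Finset.ne_of_mem_erase hi
              rw [Finset.mem_Icc] at h1 ⊢
              omega
            have hScard' : (S.erase e).card ≤ h - 1 := by
              rw [Finset.card_erase_of_mem heS]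
              omega
            have hval : val f t S = φ * τ + (1 - φ) * val f t (S.erase e) := by
              conv_lhs => rw [← Finset.insert_erase heS]
              apply val_insert_top f t (Finset.notMem_erase e S)
              intro i hi
              have := hSe hi
              rw [Finset.mem_Icc] at this
              omega
            have h3 : val f t (S.erase e) ≤ val f t (Y (h - 1)) :=
              (hY (h - 1) (by omega)).2.2 (S.erase e) hSe hScard'
            have h4 := fact1 h hh1 hhM hcase
            nlinarith [hφ1]
          · have hSM : S ⊆ Finset.Icc 1 M := by
              intro i hi
              have h1 := hS hi
              rw [Finset.mem_Icc] at h1 ⊢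
              have : i ≠ e := fun hc => heS (hc ▸ hi)
              omega
            exact (hY h hhM).2.2 S hSM hScard
      · push_neg at hcase
        have hh1 : 1 ≤ h := by omega
        have hhM1 : h - 1 ≤ M := by omega
        simp only [if_neg (by omega : ¬ h < h0)]
        refine ⟨?_, ?_, ?_⟩
        · rw [Finset.card_insert_of_notMem (heY (h - 1) hhM1), (hY (h - 1) hhM1).1]
          omega
        · apply Finset.insert_subset
          · rw [Finset.mem_Icc]; omega
          · exact (hY (h - 1) hhM1).2.1.trans (Finset.Icc_subset_Icc_right (by omega))
        · intro S hS hScard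
          rw [hvaltop (h - 1) hhM1]
          by_cases heS : e ∈ S
          · have hSe : S.erase e ⊆ Finset.Icc 1 M := by
              intro i hi
              have h1 := hS (Finset.mem_of_mem_erase hi)
              have h2 := Finset.ne_of_mem_erase hi
              rw [Finset.mem_Icc] at h1 ⊢
              omega
            have hScard' : (S.erase e).card ≤ h - 1 := by
              rw [Finset.card_erase_of_mem heS]
              omega
            have hval : val f t S = φ * τ + (1 - φ) * val f t (S.erase e) := by
              conv_lhs => rw [← Finset.insert_erase heS]
              apply val_insert_top f t (Finset.notMem_erase e S)
              intro i hi
              have := hSe hi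
              rw [Finset.mem_Icc] at this
              omega
            have h3 : val f t (S.erase e) ≤ val f t (Y (h - 1)) :=
              (hY (h - 1) hhM1).2.2 (S.erase e) hSe hScard'
            nlinarith [hφ1]
          · have hSM : S ⊆ Finset.Icc 1 M := by
              intro i hi
              have h1 := hS hi
              rw [Finset.mem_Icc] at h1 ⊢
              have : i ≠ e := fun hc => heS (hc ▸ hi)
              omega
            by_cases hhM : h ≤ M
            · have h3 : val f t S ≤ val f t (Y h) :=
                (hY h hhM).2.2 S hSM hScard
              have h4 := up h hcase hhM
              linarith
            · -- h = M + 1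
              have hScardM : S.card ≤ M := by
                calc S.card ≤ (Finset.Icc 1 M).card := Finset.card_le_card hSM
                _ = M := by rw [Nat.card_Icc]; omega
              have h3 : val f t S ≤ val f t (Y (h - 1)) := by
                have : h - 1 = M := by omega
                rw [this]
                exact (hY M (le_refl M)).2.2 S hSM (by omega)
              have h5 := hVle (h - 1) hhM1
              nlinarith [hφ0]
    · intro h hh
      by_cases hc1 : h + 1 < h0
      · simp only [if_pos hc1, if_pos (by omega : h < h0)]
        exact hYchain h (by omega)
      · by_cases hc2 : h < h0
        · -- h0 = h + 1
          simp only [if_pos hc2, if_neg hc1]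
          have : h + 1 - 1 = h := by omega
          rw [this]
          exact Finset.subset_insert e (Y h)
        · push_neg at hc2
          simp only [if_neg hc1, if_neg (by omega : ¬ h < h0)]
          have h1 : h + 1 - 1 = h := by omega
          rw [h1]
          apply Finset.insert_subset_insert
          have h2 := hYchain (h - 1) (by omega : h - 1 + 1 ≤ M)
          have h3 : h - 1 + 1 = h := by omega
          rwa [h3] at h2

/-- nestedness of optimal application portfolios. -/
theorem stmt_12 (m : ℕ) (f t : ℕ → ℝ) (hm : 1 ≤ m)
    (hf : ∀ j ∈ Finset.Icc 1 m, 0 < f j ∧ f j ≤ 1)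
    (ht : ∀ j ∈ Finset.Icc 1 m, 0 ≤ t j) (hmono : Monotone t) :
    ∃ X : ℕ → Finset ℕ,
      (∀ h, 1 ≤ h → h ≤ m → (X h).card = h ∧ X h ⊆ Finset.Icc 1 m ∧
        ∀ S ⊆ Finset.Icc 1 m, S.card ≤ h → val f t S ≤ val f t (X h)) ∧
      (∀ h, 1 ≤ h → h < m → X h ⊂ X (h + 1)) := by
  -- clamped versions of f and t that satisfy global hypotheses
  set f' : ℕ → ℝ := fun j => if j ∈ Finset.Icc 1 m then f j else 1 with hf'def
  set t' : ℕ → ℝ := fun j => t (max 1 (min j m)) with ht'def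
  have hclamp : ∀ j, max 1 (min j m) ∈ Finset.Icc 1 m := by
    intro j
    rw [Finset.mem_Icc]
    omega
  have hf'01 : ∀ j, 0 ≤ f' j ∧ f' j ≤ 1 := by
    intro j
    simp only [hf'def]
    split
    · next hj => exact ⟨(hf j hj).1.le, (hf j hj).2⟩
    · exact ⟨zero_le_one, le_refl 1⟩
  have ht'0 : ∀ j, 0 ≤ t' j := fun j => ht _ (hclamp j)
  have ht'mono : Monotone t' := by
    intro i j hij
    apply hmono
    omega
  have hagree : ∀ j ∈ Finset.Icc 1 m, f j = f' j ∧ t j = t' j := by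
    intro j hj
    have hj' := Finset.mem_Icc.mp hj
    constructor
    · simp only [hf'def]
      rw [if_pos hj]
    · simp only [ht'def]
      congr 1
      omega
  have hvaleq : ∀ S ⊆ Finset.Icc 1 m, val f t S = val f' t' S := by
    intro S hS
    exact val_congr (fun j hj => (hagree j (hS hj)).1) (fun j hj => (hagree j (hS hj)).2)
  obtain ⟨Y, hY, hYchain⟩ := chain hf'01 ht'0 ht'mono m
  refine ⟨Y, ?_, ?_⟩
  · intro h _ hhm
    obtain ⟨hcard, hsub, hopt⟩ := hY h hhm
    refine ⟨hcard, hsub, fun S hS hScard => ?_⟩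
    rw [hvaleq S hS, hvaleq (Y h) hsub]
    exact hopt S hS hScard
  · intro h _ hhm
    rw [Finset.ssubset_iff_subset_ne]
    refine ⟨hYchain h hhm, fun hc => ?_⟩
    have h1 := (hY h (by omega)).1
    have h2 := (hY (h + 1) hhm).1
    rw [hc, h2] at h1
    omega
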